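/- If the merge graph L₃ = [[w₁L₁ + w₂d₂I, −w₂A₂],[−w₂A₂, w₁L₁ + w₂d₂I]] (with all quantities integer, both Laplacians diagonalized by the same Hadamard) has PST from a vertex p ∈ {1,…,n} to a vertex q ∈ {n+1,…,2n} at time π/2, then w₂ and d₂ are both odd. -/

import Mathlib

open Matrix

/-- Perfect state transfer at time π/2 for an integer Hamiltonian `L`. -/
noncomputable def pstHalfPi {m : Type*} [Fintype m] [DecidableEq m]
    (L : Matrix m m ℤ) (j k : m) : Prop :=
  ‖((NormedSpace.exp ((Complex.I * ((Real.pi / 2 : ℝ) : ℂ)) •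
        L.map (fun x => (x : ℂ)))) j k)‖ = 1

private lemma aux_exp_eq (a b k : ℤ) (h : b - a = 4 * k) :
    Complex.exp (Complex.I * ((Real.pi / 2 : ℝ) : ℂ) * (a : ℂ)) =
      Complex.exp (Complex.I * ((Real.pi / 2 : ℝ) : ℂ) * (b : ℂ)) := by
  have hb : b = a + 4 * k := by omega
  have h2 : Complex.I * ((Real.pi / 2 : ℝ) : ℂ) * (b : ℂ) =
      Complex.I * ((Real.pi / 2 : ℝ) : ℂ) * (a : ℂ) + (k : ℂ) * (2 * (Real.pi : ℂ) * Complex.I) := by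
    rw [hb]; push_cast; ring
  rw [h2, Complex.exp_add, Complex.exp_int_mul_two_pi_mul_I, mul_one]

section helpers
variable {m : Type*} [Fintype m] [DecidableEq m]

set_option linter.unusedSectionVars false

private lemma mapC_mul (M N : Matrix m m ℤ) :
    (M * N).map (fun x : ℤ => (x : ℂ)) =
      M.map (fun x : ℤ => (x : ℂ)) * N.map (fun x : ℤ => (x : ℂ)) :=
  Matrix.map_mul (f := Int.castRingHom ℂ)

private lemma mapC_transpose (M : Matrix m m ℤ) :
    (Mᵀ).map (fun x : ℤ => (x : ℂ)) = (M.map (fun x : ℤ => (x : ℂ)))ᵀ :=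
  rfl

private lemma mapC_smul (z : ℤ) (M : Matrix m m ℤ) :
    ((z • M).map (fun x : ℤ => (x : ℂ))) = (z : ℂ) • M.map (fun x : ℤ => (x : ℂ)) := by
  ext i j
  simp only [Matrix.map_apply, Matrix.smul_apply, smul_eq_mul]
  push_cast
  ring

private lemma mapC_one :
    ((1 : Matrix m m ℤ)).map (fun x : ℤ => (x : ℂ)) = 1 := by
  ext i j
  rcases eq_or_ne i j with rfl | h
  · simp
  · simp [Matrix.one_apply_ne h]

private lemma mapC_diagonal (d : m → ℤ) :
    (Matrix.diagonal d).map (fun x : ℤ => (x : ℂ)) = Matrix.diagonal (fun i => (d i : ℂ)) :=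
  Matrix.diagonal_map (by simp)

end helpers

theorem merge_pst_cross_forces_odd (n : ℕ) [NeZero n]
    (H : Matrix (Fin n) (Fin n) ℤ)
    (hent : ∀ u v, H u v = 1 ∨ H u v = -1)
    (hH : H * Hᵀ = (n : ℤ) • 1)
    (hrow : ∀ v, H 0 v = 1) (hcol : ∀ u, H u 0 = 1)
    (L₁ A₂ : Matrix (Fin n) (Fin n) ℤ) (d₂ w₁ w₂ : ℤ)
    (Λ₁ Λ₂ : Fin n → ℤ)
    (hL₁ : (n : ℤ) • L₁ = H * Matrix.diagonal Λ₁ * Hᵀ)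
    (hL₂ : (n : ℤ) • (d₂ • (1 : Matrix (Fin n) (Fin n) ℤ) - A₂) =
      H * Matrix.diagonal Λ₂ * Hᵀ)
    (heven₁ : ∀ ℓ, Even (Λ₁ ℓ)) (heven₂ : ∀ ℓ, Even (Λ₂ ℓ))
    
    (L₃ : Matrix (Fin n ⊕ Fin n) (Fin n ⊕ Fin n) ℤ)
    (hL₃ : L₃ = Matrix.fromBlocks
      (w₁ • L₁ + (w₂ * d₂) • (1 : Matrix (Fin n) (Fin n) ℤ)) (-(w₂ • A₂))
      (-(w₂ • A₂)) (w₁ • L₁ + (w₂ * d₂) • (1 : Matrix (Fin n) (Fin n) ℤ)))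
    (p q : Fin n)
    (hpst : pstHalfPi L₃ (Sum.inl p) (Sum.inr q)) :
    Odd w₂ ∧ Odd d₂ := by
  rcases Int.even_or_odd (w₂ * d₂) with heven | hodd
  case inr => exact Int.odd_mul.mp hodd
  exfalso
  unfold pstHalfPi at hpst
  set c : ℂ := Complex.I * ((Real.pi / 2 : ℝ) : ℂ) with hcdef
  set f : Fin n → ℤ := fun ℓ => w₁ * Λ₁ ℓ + w₂ * Λ₂ ℓ with hfdef
  set g : Fin n → ℤ := fun ℓ => w₁ * Λ₁ ℓ + (2 * (w₂ * d₂) - w₂ * Λ₂ ℓ) with hgdef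
  have hDf : H * Matrix.diagonal f * Hᵀ = (n : ℤ) • (w₁ • L₁ + w₂ • (d₂ • 1 - A₂)) := by
    have hd : Matrix.diagonal f = w₁ • Matrix.diagonal Λ₁ + w₂ • Matrix.diagonal Λ₂ := by
      rw [← Matrix.diagonal_smul, ← Matrix.diagonal_smul, ← Matrix.diagonal_add]; rfl
    rw [hd, Matrix.mul_add, Matrix.add_mul, mul_smul_comm, mul_smul_comm, smul_mul_assoc,
      smul_mul_assoc, ← hL₁, ← hL₂]
    module
  have hDg : H * Matrix.diagonal g * Hᵀ =
      (n : ℤ) • (w₁ • L₁) + (2 * (w₂ * d₂)) • ((n : ℤ) • (1 : Matrix (Fin n) (Fin n) ℤ))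
        - (n : ℤ) • (w₂ • (d₂ • 1 - A₂)) := by
    have hd : Matrix.diagonal g = w₁ • Matrix.diagonal Λ₁ +
        ((2 * (w₂ * d₂)) • (1 : Matrix (Fin n) (Fin n) ℤ) - w₂ • Matrix.diagonal Λ₂) := by
      ext i j
      rcases eq_or_ne i j with rfl | hij
      · simp only [Matrix.diagonal_apply_eq, Matrix.add_apply, Matrix.sub_apply,
          Matrix.smul_apply, Matrix.one_apply_eq, smul_eq_mul, mul_one, hgdef]
      · simp only [Matrix.diagonal_apply_ne _ hij, Matrix.add_apply, Matrix.sub_apply,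
          Matrix.smul_apply, Matrix.one_apply_ne hij, smul_eq_mul, mul_zero, sub_zero,
          add_zero, zero_add, smul_zero]
    rw [hd, Matrix.mul_add, Matrix.add_mul, Matrix.mul_sub, Matrix.sub_mul,
      mul_smul_comm, mul_smul_comm, mul_smul_comm, smul_mul_assoc, smul_mul_assoc,
      smul_mul_assoc, ← hL₁, ← hL₂, Matrix.mul_one, hH]
    module
  -- the key ℤ-level diagonalization of `L₃`
  have hZ : (Matrix.fromBlocks H H H (-H)) * Matrix.diagonal (Sum.elim f g) *
      (Matrix.fromBlocks H H H (-H))ᵀ = (2 * (n : ℤ)) • L₃ := by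
    rw [hL₃, ← Matrix.fromBlocks_diagonal, Matrix.fromBlocks_transpose,
      Matrix.fromBlocks_multiply, Matrix.fromBlocks_multiply, Matrix.fromBlocks_smul]
    rw [Matrix.fromBlocks_inj]
    refine ⟨?_, ?_, ?_, ?_⟩ <;>
      simp only [Matrix.mul_zero, Matrix.zero_mul, add_zero, zero_add,
        Matrix.neg_mul, Matrix.mul_neg, neg_neg, Matrix.transpose_neg] <;>
      rw [hDf, hDg] <;> module
  have hKK : (Matrix.fromBlocks H H H (-H)) * (Matrix.fromBlocks H H H (-H))ᵀ
      = (2 * (n : ℤ)) • (1 : Matrix (Fin n ⊕ Fin n) (Fin n ⊕ Fin n) ℤ) := by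
    rw [Matrix.fromBlocks_transpose, Matrix.fromBlocks_multiply, ← Matrix.fromBlocks_one,
      Matrix.fromBlocks_smul]
    rw [Matrix.fromBlocks_inj]
    refine ⟨?_, ?_, ?_, ?_⟩ <;>
      simp only [Matrix.transpose_neg, Matrix.neg_mul, Matrix.mul_neg, neg_neg, hH] <;>
      module
  -- move to ℂ
  set Kc : Matrix (Fin n ⊕ Fin n) (Fin n ⊕ Fin n) ℂ :=
    (Matrix.fromBlocks H H H (-H)).map (fun x : ℤ => (x : ℂ)) with hKcdef
  set N : ℂ := ((2 * (n : ℤ) : ℤ) : ℂ) with hNdef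
  have hN0 : N ≠ 0 := by
    rw [hNdef]
    exact_mod_cast (by have := NeZero.ne n; omega : (2 * (n : ℤ)) ≠ 0)
  have hZc : Kc * Matrix.diagonal (fun s => ((Sum.elim f g s : ℤ) : ℂ)) * Kcᵀ
      = N • L₃.map (fun x : ℤ => (x : ℂ)) := by
    have h := congrArg (fun M : Matrix (Fin n ⊕ Fin n) (Fin n ⊕ Fin n) ℤ =>
      M.map (fun x : ℤ => (x : ℂ))) hZ
    simpa only [mapC_mul, mapC_transpose, mapC_smul, mapC_diagonal, hKcdef, hNdef] using h
  have hKKc : Kc * Kcᵀ = N • 1 := by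
    have h := congrArg (fun M : Matrix (Fin n ⊕ Fin n) (Fin n ⊕ Fin n) ℤ =>
      M.map (fun x : ℤ => (x : ℂ))) hKK
    simpa only [mapC_mul, mapC_transpose, mapC_smul, mapC_one, hKcdef, hNdef] using h
  have hinv : Kc * (N⁻¹ • Kcᵀ) = 1 := by
    rw [Matrix.mul_smul, hKKc, smul_smul, inv_mul_cancel₀ hN0, one_smul]
  have hU : IsUnit Kc :=
    (Matrix.isUnit_iff_isUnit_det Kc).2 (Matrix.isUnit_det_of_right_inverse hinv)
  have hKinv : Kc⁻¹ = N⁻¹ • Kcᵀ := Matrix.inv_eq_right_inv hinv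
  have hdc : Matrix.diagonal (fun s : Fin n ⊕ Fin n => c * ((Sum.elim f g s : ℤ) : ℂ)) =
      c • Matrix.diagonal (fun s => ((Sum.elim f g s : ℤ) : ℂ)) := by
    ext i j
    rcases eq_or_ne i j with rfl | hij
    · simp
    · simp [Matrix.diagonal_apply_ne _ hij]
  have hM : c • L₃.map (fun x : ℤ => (x : ℂ)) =
      Kc * Matrix.diagonal (fun s => c * ((Sum.elim f g s : ℤ) : ℂ)) * Kc⁻¹ := by
    have hL₃c : L₃.map (fun x : ℤ => (x : ℂ)) =
        N⁻¹ • (Kc * Matrix.diagonal (fun s => ((Sum.elim f g s : ℤ) : ℂ)) * Kcᵀ) := by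
      rw [hZc, smul_smul, inv_mul_cancel₀ hN0, one_smul]
    rw [hKinv, hL₃c, hdc]
    simp only [Matrix.mul_smul, Matrix.smul_mul, smul_smul]
    congr 1
    ring
  have hexp : NormedSpace.exp (c • L₃.map (fun x : ℤ => (x : ℂ))) =
      Kc * Matrix.diagonal (fun s => Complex.exp (c * ((Sum.elim f g s : ℤ) : ℂ))) * Kc⁻¹ := by
    have hfun : (fun i => NormedSpace.exp (c * ((Sum.elim f g i : ℤ) : ℂ))) =
        fun s => Complex.exp (c * ((Sum.elim f g s : ℤ) : ℂ)) :=
      funext fun s => (congrFun Complex.exp_eq_exp_ℂ _).symm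
    rw [hM, Matrix.exp_conj Kc _ hU, Matrix.exp_diagonal, Pi.exp_def, hfun]
  have hexpfg : ∀ ℓ, Complex.exp (c * ((g ℓ : ℤ) : ℂ)) = Complex.exp (c * ((f ℓ : ℤ) : ℂ)) := by
    intro ℓ
    obtain ⟨a, ha⟩ := heven
    obtain ⟨b, hb⟩ := heven₂ ℓ
    exact (aux_exp_eq (f ℓ) (g ℓ) (a - w₂ * b)
      (by simp only [hfdef, hgdef]; linear_combination 2 * ha - 2 * w₂ * hb)).symm
  have hzero : (Kc * Matrix.diagonal (fun s => Complex.exp (c * ((Sum.elim f g s : ℤ) : ℂ)))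
      * Kc⁻¹) (Sum.inl p) (Sum.inr q) = 0 := by
    rw [hKinv, Matrix.mul_apply]
    have hterm : ∀ s, (Kc * Matrix.diagonal
          (fun s => Complex.exp (c * ((Sum.elim f g s : ℤ) : ℂ)))) (Sum.inl p) s *
          (N⁻¹ • Kcᵀ) s (Sum.inr q)
        = N⁻¹ * (Kc (Sum.inl p) s * Complex.exp (c * ((Sum.elim f g s : ℤ) : ℂ)) *
            Kc (Sum.inr q) s) := by
      intro s
      rw [Matrix.mul_diagonal, Matrix.smul_apply, Matrix.transpose_apply, smul_eq_mul]
      ring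
    simp only [hterm]
    rw [Fintype.sum_sum_type, ← Finset.sum_add_distrib]
    refine Finset.sum_eq_zero fun ℓ _ => ?_
    simp only [Sum.elim_inl, Sum.elim_inr, hKcdef, Matrix.map_apply,
      Matrix.fromBlocks_apply₁₁, Matrix.fromBlocks_apply₁₂, Matrix.fromBlocks_apply₂₁,
      Matrix.fromBlocks_apply₂₂, Matrix.neg_apply, Int.cast_neg, hexpfg ℓ]
    ring
  rw [hexp, hzero] at hpst
  simp at hpst
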